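/- arXiv:2312.02421 — 2 statements merged into one kernel-verified Lean document; each statement's English description precedes it below -/
import Mathlib

section
/- Let N ≥ 1 be an integer, λ₁, …, λ_N real numbers, r₁ > r₂ > ⋯ > r_N > 0, and n a positive integer. Then for each i = 1, …, N, the i-th entry of the vector adj(M_N^{(n)}) · e equals (−1)^{N−i} · (∏_{j=1}^{i−1} (−2λ_j + 1)) · K_N^{i,i+1}(n), where adj denotes the adjugate matrix and e ∈ ℝ^N is the all-ones column vector. -/
open Matrix

/-- The `n`-order generalized polarization matrix `M_N^{(n)}` of an `N`-layer concentric
disk structure: diagonal entries `-2λ_i`, entries `(r_j/r_i)^{2n}` above the diagonal and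
`-1` below it (indices shifted by one, from `Fin N` to `{1, …, N}`). -/
noncomputable def GPM (N : ℕ) (lam r : ℕ → ℝ) (n : ℕ) : Matrix (Fin N) (Fin N) ℝ :=
  Matrix.of fun i j =>
    if i = j then -2 * lam ((i : ℕ) + 1)
    else if i < j then (r ((j : ℕ) + 1) / r ((i : ℕ) + 1)) ^ (2 * n)
    else -1

/-- `t_{p,q} = (r_q / r_p)^{2n}`. -/
noncomputable def tpow (r : ℕ → ℝ) (n p q : ℕ) : ℝ := (r q / r p) ^ (2 * n)

/-- The `(N-j+1) × (N-j+1)` matrix whose determinant is `K_N^{i,j}(n)`. -/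
noncomputable def Kmat (N : ℕ) (lam r : ℕ → ℝ) (n i j : ℕ) :
    Matrix (Fin (N - j + 1)) (Fin (N - j + 1)) ℝ :=
  Matrix.of fun p c =>
    let m := j + (c : ℕ)
    if (p : ℕ) = 0 then
      if m = N then tpow r n i N + 2 * lam N else tpow r n i m + 1
    else
      let q := j + (p : ℕ) - 1
      if m < q then 0
      else if m = q then -2 * lam q + 1
      else if m = N then tpow r n q N + 2 * lam N
      else tpow r n q m + 1

/-- `K_N^{i,j}(n)` for `j ≤ N`, with the convention `K_N^{i,N+1}(n) = 1`. -/
noncomputable def Kdet (N : ℕ) (lam r : ℕ → ℝ) (n i j : ℕ) : ℝ :=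
  if j ≤ N then (Kmat N lam r n i j).det else 1

private lemma coe_succAbove_eq {N : ℕ} (i : Fin (N + 1)) (c : Fin N) :
    ((i.succAbove c : Fin (N + 1)) : ℕ) =
      if (c : ℕ) < (i : ℕ) then (c : ℕ) else (c : ℕ) + 1 := by
  rcases Nat.lt_or_ge (c : ℕ) (i : ℕ) with h | h
  · rw [Fin.succAbove_of_castSucc_lt _ _ (by simpa [Fin.lt_def] using h), if_pos h]
    simp
  · rw [Fin.succAbove_of_le_castSucc _ _ (by simpa [Fin.le_def] using h),
      if_neg (not_lt.mpr h)]
    simp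

/-- The `i`-th entry of `adj(M_N^{(n)}) e` equals
`(-1)^{N-i} (∏_{j=1}^{i-1} (-2λ_j + 1)) K_N^{i,i+1}(n)`. -/
theorem adjugate_GPM_mulVec_one (N : ℕ) (hN : 1 ≤ N) (lam r : ℕ → ℝ)
    (hr : ∀ k, 1 ≤ k → k < N → r (k + 1) < r k) (hrN : 0 < r N)
    (n : ℕ) (hn : 0 < n) :
    ∀ i : Fin N,
      ((GPM N lam r n).adjugate *ᵥ fun _ : Fin N => (1 : ℝ)) i =
        (-1 : ℝ) ^ (N - ((i : ℕ) + 1)) *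
          (∏ j ∈ Finset.Icc 1 (i : ℕ), (-2 * lam j + 1)) *
            Kdet N lam r n ((i : ℕ) + 1) ((i : ℕ) + 2) := by
  obtain ⟨N', rfl⟩ : ∃ N', N = N' + 1 := ⟨N - 1, by omega⟩
  clear hN hr hrN hn
  intro i
  have hiN : (i : ℕ) ≤ N' := by have := i.isLt; omega
  set κ := (i : ℕ) with hκdef
  set Mm := GPM (N' + 1) lam r n with hMdef
  set B := Matrix.updateCol Mm i (fun _ => (1 : ℝ)) with hBdef
  set E := Matrix.of (fun q m : Fin (N' + 1) =>
      if q = Fin.last N' then B q m else B q m - B (Fin.last N') m) with hEdef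
  have hBapp : ∀ q m : Fin (N' + 1), B q m = if m = i then 1 else Mm q m := by
    intro q m; rw [hBdef, Matrix.updateCol_apply]
  -- master formula for the row-reduced matrix `E`
  have hEval : ∀ q m : Fin (N' + 1), (q : ℕ) < N' → m ≠ i →
      E q m = if (m : ℕ) < (q : ℕ) then 0
        else if (m : ℕ) = (q : ℕ) then -2 * lam ((q : ℕ) + 1) + 1
        else if (m : ℕ) = N' then
          (r (N' + 1) / r ((q : ℕ) + 1)) ^ (2 * n) + 2 * lam (N' + 1)
        else (r ((m : ℕ) + 1) / r ((q : ℕ) + 1)) ^ (2 * n) + 1 := by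
    intro q m hq hmi
    have hql : q ≠ Fin.last N' := by
      intro h
      rw [h] at hq
      simp at hq
    have hEq : E q m = Mm q m - Mm (Fin.last N') m := by
      rw [hEdef]
      simp only [Matrix.of_apply, if_neg hql, hBapp, if_neg hmi]
    rw [hEq, hMdef]
    simp only [GPM, Matrix.of_apply, Fin.val_last]
    rcases eq_or_lt_of_le (Nat.lt_succ_iff.mp m.isLt) with hm | hm
    · -- m is the last column
      have hml : Fin.last N' = m := by
        apply Fin.ext
        simp [hm]
      have hqm : ¬ q = m := by
        intro h
        rw [h] at hq
        omega
      have hqltm : q < m := by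
        rw [Fin.lt_def, hm]
        exact hq
      rw [if_neg hqm, if_pos hqltm, if_pos hml,
        if_neg (by omega : ¬ (m : ℕ) < (q : ℕ)),
        if_neg (by omega : ¬ (m : ℕ) = (q : ℕ)), if_pos hm, hm]
      ring
    · -- m is not the last column
      have hml : ¬ Fin.last N' = m := by
        intro h
        rw [← h] at hm
        simp at hm
      have hml2 : ¬ Fin.last N' < m := by
        rw [Fin.lt_def, Fin.val_last]
        omega
      rw [if_neg hml, if_neg hml2]
      rcases lt_trichotomy ((m : ℕ)) ((q : ℕ)) with h | h | h
      · rw [if_neg (by intro hh; rw [hh] at h; omega : ¬ q = m),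
          if_neg (by rw [Fin.lt_def]; omega : ¬ q < m), if_pos h]
        ring
      · have hqm : q = m := Fin.ext h.symm
        rw [if_pos hqm, if_neg (by omega : ¬ (m : ℕ) < (q : ℕ)), if_pos h]
        ring
      · rw [if_neg (by intro hh; rw [hh] at h; omega : ¬ q = m),
          if_pos (by rw [Fin.lt_def]; omega : q < m),
          if_neg (by omega : ¬ (m : ℕ) < (q : ℕ)),
          if_neg (by omega : ¬ (m : ℕ) = (q : ℕ)),
          if_neg (by omega : ¬ (m : ℕ) = N')]
        ring
  -- step A : adjugate entry as a determinant
  have stepA : ((Mm.adjugate) *ᵥ fun _ : Fin (N' + 1) => (1 : ℝ)) i = B.det := by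
    rw [← Matrix.cramer_eq_adjugate_mulVec, Matrix.cramer_apply, hBdef]
  -- step B : row reduction
  have stepB : B.det = E.det := by
    refine Matrix.det_eq_of_forall_row_eq_smul_add_const
      (fun q : Fin (N' + 1) => if q = Fin.last N' then 0 else 1) (Fin.last N')
      (if_pos rfl) ?_
    intro q m
    by_cases h : q = Fin.last N'
    · simp [hEdef, h]
    · simp [hEdef, h]
  -- column i of E is the last standard basis vector
  have hcol0 : ∀ q : Fin (N' + 1), q ≠ Fin.last N' → E q i = 0 := by
    intro q hq
    simp [hEdef, hq, hBapp]
  have hcolLast : E (Fin.last N') i = 1 := by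
    simp [hEdef, hBapp]
  -- step C : Laplace expansion along column i
  set F := E.submatrix (Fin.last N').succAbove i.succAbove with hFdef
  have stepC : E.det = (-1 : ℝ) ^ (N' + κ) * F.det := by
    rw [Matrix.det_succ_column E i]
    rw [Finset.sum_eq_single (Fin.last N')]
    · rw [hcolLast, Fin.val_last, hFdef]
      ring
    · intro p _ hp
      rw [hcol0 p hp]
      ring
    · intro h
      exact absurd (Finset.mem_univ _) h
  -- entries of F
  have hFval : ∀ p c : Fin N', F p c =
      if (if (c : ℕ) < κ then (c : ℕ) else (c : ℕ) + 1) < (p : ℕ) then 0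
      else if (if (c : ℕ) < κ then (c : ℕ) else (c : ℕ) + 1) = (p : ℕ) then
        -2 * lam ((p : ℕ) + 1) + 1
      else if (if (c : ℕ) < κ then (c : ℕ) else (c : ℕ) + 1) = N' then
        (r (N' + 1) / r ((p : ℕ) + 1)) ^ (2 * n) + 2 * lam (N' + 1)
      else (r ((if (c : ℕ) < κ then (c : ℕ) else (c : ℕ) + 1) + 1) / r ((p : ℕ) + 1)) ^ (2 * n)
        + 1 := by
    intro p c
    have h1 : F p c = E p.castSucc (i.succAbove c) := by
      rw [hFdef]
      simp [Matrix.submatrix_apply, Fin.succAbove_last]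
    rw [h1, hEval _ _ (by simpa using p.isLt) (Fin.succAbove_ne i c), coe_succAbove_eq,
      ← hκdef]
    simp only [Fin.coe_castSucc]
  -- block decomposition
  have hsum : κ + (N' - κ) = N' := by omega
  set e : Fin κ ⊕ Fin (N' - κ) ≃ Fin N' := finSumFinEquiv.trans (finCongr hsum) with hedef
  have he1 : ∀ p : Fin κ, ((e (Sum.inl p) : Fin N') : ℕ) = (p : ℕ) := by
    intro p
    simp [hedef]
  have he2 : ∀ p : Fin (N' - κ), ((e (Sum.inr p) : Fin N') : ℕ) = κ + (p : ℕ) := by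
    intro p
    simp [hedef]
  have hFe : F.det = ((F.submatrix e e).toBlocks₁₁).det * ((F.submatrix e e).toBlocks₂₂).det := by
    have h21 : (F.submatrix (e : Fin κ ⊕ Fin (N' - κ) → Fin N')
        (e : Fin κ ⊕ Fin (N' - κ) → Fin N')).toBlocks₂₁ = 0 := by
      ext p c
      simp only [Matrix.toBlocks₂₁, Matrix.of_apply, Matrix.submatrix_apply, Matrix.zero_apply]
      rw [hFval, he1, he2, if_pos c.isLt, if_pos (by have := c.isLt; omega : (c : ℕ) < κ + (p : ℕ))]
    rw [← Matrix.det_submatrix_equiv_self e F]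
    conv_lhs => rw [← Matrix.fromBlocks_toBlocks (F.submatrix e e), h21]
    rw [Matrix.det_fromBlocks_zero₂₁]
  -- the upper-left block
  have hA : ((F.submatrix e e).toBlocks₁₁).det = ∏ j ∈ Finset.Icc 1 κ, (-2 * lam j + 1) := by
    have htri : ((F.submatrix e e).toBlocks₁₁).BlockTriangular id := by
      intro p c hpc
      have hpc' : (c : ℕ) < (p : ℕ) := hpc
      simp only [Matrix.toBlocks₁₁, Matrix.of_apply, Matrix.submatrix_apply]
      rw [hFval, he1, he1, if_pos c.isLt, if_pos hpc']
    rw [Matrix.det_of_upperTriangular htri]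
    have hdiag : ∀ p : Fin κ, (F.submatrix e e).toBlocks₁₁ p p = -2 * lam ((p : ℕ) + 1) + 1 := by
      intro p
      simp only [Matrix.toBlocks₁₁, Matrix.of_apply, Matrix.submatrix_apply]
      rw [hFval, he1, if_pos p.isLt, if_neg (lt_irrefl ((p : ℕ))), if_pos rfl]
    calc ∏ p : Fin κ, (F.submatrix e e).toBlocks₁₁ p p
        = ∏ p : Fin κ, (-2 * lam ((p : ℕ) + 1) + 1) :=
          Finset.prod_congr rfl fun p _ => hdiag p
      _ = ∏ k ∈ Finset.range κ, (-2 * lam (k + 1) + 1) :=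
          Fin.prod_univ_eq_prod_range (fun k => -2 * lam (k + 1) + 1) κ
      _ = ∏ j ∈ Finset.Icc 1 κ, (-2 * lam j + 1) := by
          rw [show Finset.Icc 1 κ = Finset.Ico 1 (κ + 1) from (Finset.Ico_add_one_right_eq_Icc 1 κ).symm,
            Finset.prod_Ico_eq_prod_range]
          simp only [Nat.add_sub_cancel]
          exact Finset.prod_congr rfl fun x _ => by rw [add_comm 1 x]
  -- the lower-right block
  have hD : ((F.submatrix e e).toBlocks₂₂).det = Kdet (N' + 1) lam r n (κ + 1) (κ + 2) := by
    have hDval : ∀ p c : Fin (N' - κ), (F.submatrix e e).toBlocks₂₂ p c =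
        if κ + (c : ℕ) + 1 < κ + (p : ℕ) then 0
        else if κ + (c : ℕ) + 1 = κ + (p : ℕ) then -2 * lam (κ + (p : ℕ) + 1) + 1
        else if κ + (c : ℕ) + 1 = N' then
          (r (N' + 1) / r (κ + (p : ℕ) + 1)) ^ (2 * n) + 2 * lam (N' + 1)
        else (r (κ + (c : ℕ) + 1 + 1) / r (κ + (p : ℕ) + 1)) ^ (2 * n) + 1 := by
      intro p c
      simp only [Matrix.toBlocks₂₂, Matrix.of_apply, Matrix.submatrix_apply]
      rw [hFval, he2, he2, if_neg (by omega : ¬ κ + (c : ℕ) < κ)]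
    by_cases hlast : κ = N'
    · haveI : IsEmpty (Fin (N' - κ)) := by
        rw [hlast, Nat.sub_self]
        infer_instance
      rw [Matrix.det_isEmpty, Kdet, if_neg (by omega)]
    · have hk2 : κ + 2 ≤ N' + 1 := by omega
      rw [Kdet, if_pos hk2]
      have hsz : N' + 1 - (κ + 2) + 1 = N' - κ := by omega
      rw [← Matrix.det_submatrix_equiv_self (finCongr hsz.symm)
        (Kmat (N' + 1) lam r n (κ + 1) (κ + 2))]
      congr 1
      ext p c
      rw [Matrix.submatrix_apply, hDval]
      simp only [Kmat, Matrix.of_apply, finCongr_apply, Fin.val_cast]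
      by_cases hp0 : (p : ℕ) = 0
      · rw [if_pos hp0, hp0]
        rw [if_neg (by omega : ¬ κ + (c : ℕ) + 1 < κ + 0),
          if_neg (by omega : ¬ κ + (c : ℕ) + 1 = κ + 0)]
        by_cases hcN : κ + (c : ℕ) + 1 = N'
        · rw [if_pos hcN, if_pos (by omega : κ + 2 + (c : ℕ) = N' + 1)]
          simp [tpow]
        · rw [if_neg hcN, if_neg (by omega : ¬ κ + 2 + (c : ℕ) = N' + 1)]
          simp [tpow, show κ + 2 + (c : ℕ) = κ + (c : ℕ) + 1 + 1 from by omega]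
      · rw [if_neg hp0]
        rw [show κ + 2 + (p : ℕ) - 1 = κ + 1 + (p : ℕ) from by omega]
        rcases lt_trichotomy ((c : ℕ) + 1) ((p : ℕ)) with h | h | h
        · rw [if_pos (by omega : κ + (c : ℕ) + 1 < κ + (p : ℕ)),
            if_pos (by omega : κ + 2 + (c : ℕ) < κ + 1 + (p : ℕ))]
        · rw [if_neg (by omega : ¬ κ + (c : ℕ) + 1 < κ + (p : ℕ)),
            if_pos (by omega : κ + (c : ℕ) + 1 = κ + (p : ℕ)),
            if_neg (by omega : ¬ κ + 2 + (c : ℕ) < κ + 1 + (p : ℕ)),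
            if_pos (by omega : κ + 2 + (c : ℕ) = κ + 1 + (p : ℕ)),
            show κ + 1 + (p : ℕ) = κ + (p : ℕ) + 1 from by omega]
        · rw [if_neg (by omega : ¬ κ + (c : ℕ) + 1 < κ + (p : ℕ)),
            if_neg (by omega : ¬ κ + (c : ℕ) + 1 = κ + (p : ℕ)),
            if_neg (by omega : ¬ κ + 2 + (c : ℕ) < κ + 1 + (p : ℕ)),
            if_neg (by omega : ¬ κ + 2 + (c : ℕ) = κ + 1 + (p : ℕ))]
          by_cases hcN : κ + (c : ℕ) + 1 = N'
          · rw [if_pos hcN, if_pos (by omega : κ + 2 + (c : ℕ) = N' + 1)]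
            simp only [tpow]
            rw [show κ + 1 + (p : ℕ) = κ + (p : ℕ) + 1 from by omega]
          · rw [if_neg hcN, if_neg (by omega : ¬ κ + 2 + (c : ℕ) = N' + 1)]
            simp only [tpow]
            rw [show κ + 1 + (p : ℕ) = κ + (p : ℕ) + 1 from by omega,
              show κ + 2 + (c : ℕ) = κ + (c : ℕ) + 1 + 1 from by omega]
  -- assemble
  rw [stepA, stepB, stepC, hFe, hA, hD]
  rw [show N' + 1 - (κ + 1) = N' - κ from by omega]
  rw [show N' + κ = (N' - κ) + 2 * κ from by omega, pow_add, pow_mul, neg_one_sq, one_pow,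
    mul_one]
  ring
end

section
/- Let N ≥ 1 be an integer, λ₁, …, λ_N real numbers, r₁ > r₂ > ⋯ > r_N > 0, and n a positive integer. Then for each i = 1, …, N, the i-th entry of the row vector eᵀ Υ_N^{(n)} adj(M_N^{(n)}) equals (∏_{j=1}^{i−1} (−2λ_j − 1)) · L_N^{i,i+1}(n), where adj denotes the adjugate matrix, Υ_N^{(n)} = diag(r₁^{2n}, …, r_N^{2n}), and e ∈ ℝ^N is the all-ones column vector. -/
set_option maxHeartbeats 8000000


open Matrix

/-- The `(N-j+2) × (N-j+2)` matrix whose determinant is `L_N^{i,j}(n)`. -/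
noncomputable def Lmat (N : ℕ) (lam r : ℕ → ℝ) (n i j : ℕ) :
    Matrix (Fin (N - j + 2)) (Fin (N - j + 2)) ℝ :=
  Matrix.of fun p c =>
    if (p : ℕ) = 0 then
      if (c : ℕ) = 0 then r i ^ (2 * n) else r (j + (c : ℕ) - 1) ^ (2 * n)
    else if (p : ℕ) = N - j + 1 then
      if (c : ℕ) = N - j + 1 then -2 * lam N else -1
    else
      let q := j + (p : ℕ) - 1
      if (c : ℕ) = 0 then -1 - tpow r n q i
      else
        let m := j + (c : ℕ) - 1
        if m < q then -1 - tpow r n q m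
        else if m = q then -2 * lam q - 1
        else 0

/-- `L_N^{i,j}(n)` for `j ≤ N`, with the convention `L_N^{i,N+1}(n) = r_i^{2n}`. -/
noncomputable def Ldet (N : ℕ) (lam r : ℕ → ℝ) (n i j : ℕ) : ℝ :=
  if j ≤ N then (Lmat N lam r n i j).det else r i ^ (2 * n)

lemma vecMul_adjugate_apply {N : ℕ} (A : Matrix (Fin N) (Fin N) ℝ) (v : Fin N → ℝ) (j : Fin N) :
    (v ᵥ* A.adjugate) j = (A.updateRow j v).det := by
  set s : Fin N → Fin N → ℝ := fun k => Pi.single k (1:ℝ) with hs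
  have h1 : (v ᵥ* A.adjugate) j = ∑ k, (v k • (cramer Aᵀ (s k) : Fin N → ℝ)) j := by
    simp [vecMul, dotProduct, adjugate_def, smul_eq_mul, hs]
  have h2 : ∑ k, v k • s k = v := by
    ext m; simp [hs, Pi.single_apply, Finset.sum_ite_eq', eq_comm]
  rw [h1, ← Finset.sum_apply]
  simp_rw [← _root_.map_smul]
  rw [← map_sum, h2, cramer_apply, updateCol_transpose, det_transpose]

lemma det_peel {m : ℕ} (A : Matrix (Fin (m+1)) (Fin (m+1)) ℝ)
    (h : ∀ c : Fin (m+1), c ≠ 0 → A 0 c = 0) :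
    A.det = A 0 0 * (A.submatrix Fin.succ Fin.succ).det := by
  rw [det_succ_row_zero]
  rw [Finset.sum_eq_single 0]
  · simp only [Fin.val_zero, pow_zero, one_mul]
    have : (0:Fin (m+1)).succAbove = Fin.succ := by
      ext p : 1; simp [Fin.succAbove, Fin.pos_iff_ne_zero]
    rw [this]
  · intro b _ hb
    rw [h b hb]; ring
  · simp

lemma det_lower_block : ∀ (k : ℕ) {n j : ℕ} (hkn : k + j = n) (A : Matrix (Fin n) (Fin n) ℝ)
    (h : ∀ q c : Fin n, (q:ℕ) < k → (q:ℕ) < (c:ℕ) → A q c = 0),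
    A.det = (∏ q : Fin k, A ⟨q, by omega⟩ ⟨q, by omega⟩) *
      (A.submatrix (fun p : Fin j => (⟨k + (p:ℕ), by omega⟩ : Fin n))
        (fun p : Fin j => (⟨k + (p:ℕ), by omega⟩ : Fin n))).det := by
  intro k
  induction k with
  | zero =>
    intro n j hkn A h
    have he : (fun p : Fin j => (⟨0 + (p:ℕ), by omega⟩ : Fin n))
        = fun p => (finCongr (by omega : j = n)) p := by
      ext p; simp
    rw [he]
    simp only [Finset.univ_eq_empty, Finset.prod_empty, one_mul]
    exact (det_submatrix_equiv_self _ _).symm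
  | succ k ih =>
    intro n j hkn A h
    obtain ⟨m, rfl⟩ : ∃ m, n = m + 1 := ⟨n - 1, by omega⟩
    have h0 : ∀ c : Fin (m+1), c ≠ 0 → A 0 c = 0 := by
      intro c hc
      refine h 0 c (by simp) ?_
      have := Fin.pos_of_ne_zero hc
      exact Fin.lt_iff_val_lt_val.mp this
    rw [det_peel A h0]
    rw [ih (n := m) (j := j) (by omega) (A.submatrix Fin.succ Fin.succ)
      (fun q c hq hqc => h q.succ c.succ (by simpa using hq) (by simpa using hqc))]
    have e2 : ((A.submatrix Fin.succ Fin.succ).submatrix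
        (fun p : Fin j => (⟨k + (p:ℕ), by omega⟩ : Fin m))
        (fun p : Fin j => (⟨k + (p:ℕ), by omega⟩ : Fin m)))
        = A.submatrix (fun p : Fin j => (⟨k + 1 + (p:ℕ), by omega⟩ : Fin (m+1)))
          (fun p : Fin j => (⟨k + 1 + (p:ℕ), by omega⟩ : Fin (m+1))) := by
      ext p c
      simp only [submatrix_apply]
      congr 1 <;> · ext; simp [Fin.succ]; omega
    rw [e2, Fin.prod_univ_succ]
    simp only [submatrix_apply, Fin.val_succ, Fin.val_zero, Fin.mk_zero]
    have e3 : ∀ q : Fin k, Fin.succ (⟨(q:ℕ), by omega⟩ : Fin m)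
        = (⟨(q:ℕ)+1, by omega⟩ : Fin (m+1)) := by
      intro q; ext; simp [Fin.succ]
    simp only [e3]
    ring

/-- The `i`-th entry of the row vector `eᵀ Υ_N^{(n)} adj(M_N^{(n)})` equals
`(∏_{j=1}^{i-1} (-2λ_j - 1)) L_N^{i,i+1}(n)`, where `Υ_N^{(n)} = diag(r₁^{2n}, …, r_N^{2n})`. -/
theorem vecMul_Upsilon_adjugate_GPM (N : ℕ) (hN : 1 ≤ N) (lam r : ℕ → ℝ)
    (hr : ∀ k, 1 ≤ k → k < N → r (k + 1) < r k) (hrN : 0 < r N)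
    (n : ℕ) (hn : 0 < n) :
    ∀ i : Fin N,
      ((fun _ : Fin N => (1 : ℝ)) ᵥ*
          (Matrix.diagonal (fun k : Fin N => r ((k : ℕ) + 1) ^ (2 * n)) *
            (GPM N lam r n).adjugate)) i =
        (∏ j ∈ Finset.Icc 1 (i : ℕ), (-2 * lam j - 1)) *
          Ldet N lam r n ((i : ℕ) + 1) ((i : ℕ) + 2) := by
  -- positivity of the radii
  have hpos : ∀ m : ℕ, 1 ≤ m → m ≤ N → 0 < r m := by
    have key : ∀ d m, m + d = N → 1 ≤ m → 0 < r m := by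
      intro d
      induction d with
      | zero =>
        intro m hm _
        have : m = N := by omega
        subst this; exact hrN
      | succ d ih =>
        intro m hm h1
        have h2 := hr m h1 (by omega)
        have h3 := ih (m+1) (by omega) (by omega)
        linarith
    intro m h1 h2; exact key (N - m) m (by omega) h1
  intro i
  set k := (i : ℕ) with hk
  have hkN : k < N := i.2
  set u : Fin N → ℝ := fun q => r ((q:ℕ)+1) ^ (2*n) with hu
  set M := GPM N lam r n with hM
  have hrpos : ∀ q : Fin N, (0:ℝ) < r ((q:ℕ)+1) := fun q => hpos _ (by omega) (by omega)
  -- entries of M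
  have hM_diag : ∀ q : Fin N, M q q = -2 * lam ((q:ℕ)+1) := by
    intro q
    show (if q = q then -2 * lam ((q:ℕ)+1) else _) = -2 * lam ((q:ℕ)+1)
    rw [if_pos rfl]
  have hM_lt : ∀ q m : Fin N, (q:ℕ) < (m:ℕ) →
      M q m = r ((m:ℕ)+1) ^ (2*n) / r ((q:ℕ)+1) ^ (2*n) := by
    intro q m h
    have hne : q ≠ m := by intro e; rw [e] at h; omega
    have hlt : q < m := Fin.lt_iff_val_lt_val.mpr h
    show (if q = m then _ else if q < m then (r ((m:ℕ)+1) / r ((q:ℕ)+1)) ^ (2*n) else _)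
        = r ((m:ℕ)+1) ^ (2*n) / r ((q:ℕ)+1) ^ (2*n)
    rw [if_neg hne, if_pos hlt, div_pow]
  have hM_gt : ∀ q m : Fin N, (m:ℕ) < (q:ℕ) → M q m = -1 := by
    intro q m h
    have hne : q ≠ m := by intro e; rw [e] at h; omega
    have hnlt : ¬ q < m := by rw [Fin.lt_iff_val_lt_val]; omega
    show (if q = m then _ else if q < m then _ else (-1:ℝ)) = -1
    rw [if_neg hne, if_neg hnlt]
  -- step A : LHS is a determinant
  have stepA : ((fun _ : Fin N => (1 : ℝ)) ᵥ*
      (Matrix.diagonal (fun q : Fin N => r ((q : ℕ) + 1) ^ (2 * n)) * M.adjugate)) i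
      = (M.updateRow i u).det := by
    rw [← vecMul_vecMul]
    have h1 : (fun _ : Fin N => (1:ℝ)) ᵥ*
        Matrix.diagonal (fun q : Fin N => r ((q:ℕ)+1) ^ (2*n)) = u := by
      ext q; simp [vecMul_diagonal, hu]
    rw [h1, vecMul_adjugate_apply]
  -- row operations
  set c : Fin N → ℝ := fun q => if q = i ∨ (q:ℕ)+1 = N then 0
    else -((r ((q:ℕ)+1))^(2*n))⁻¹ with hc
  set D := M.updateRow i u with hD
  set E := Matrix.of (fun q m : Fin N => D q m + c q * D i m) with hE
  have hdet : E.det = D.det :=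
    det_eq_of_forall_row_eq_smul_add_const c i (by simp [hc]) (fun q m => rfl)
  have hDi : ∀ m, D i m = u m := by intro m; rw [hD, updateRow_self]
  have hDq : ∀ q, q ≠ i → ∀ m, D q m = M q m := by
    intro q hq m; rw [hD, updateRow_ne hq]
  -- entries of E
  have hEi : ∀ m, E i m = u m := by
    intro m
    show D i m + c i * D i m = u m
    rw [hDi]; simp [hc]
  have hElast : ∀ (q : Fin N), (q:ℕ)+1 = N → q ≠ i → ∀ m, E q m = M q m := by
    intro q hqN hq m
    show D q m + c q * D i m = M q m
    rw [hDq q hq]; simp [hc, hqN]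
  have hEmid : ∀ (q : Fin N), q ≠ i → (q:ℕ)+1 ≠ N → ∀ m,
      E q m = M q m - r ((m:ℕ)+1) ^ (2*n) / r ((q:ℕ)+1) ^ (2*n) := by
    intro q hq hqN m
    show D q m + c q * D i m = _
    rw [hDq q hq, hDi]
    simp only [hc, hq, hqN, or_self, if_false, hu]
    ring
  -- zeros above the diagonal in the first k rows
  have hzero : ∀ q m : Fin N, (q:ℕ) < k → (q:ℕ) < (m:ℕ) → E q m = 0 := by
    intro q m hq hqm
    have hqi : q ≠ i := by intro e; rw [e] at hq; omega
    have hqN' : (q:ℕ)+1 ≠ N := by omega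
    rw [hEmid q hqi hqN' m, hM_lt q m hqm]; ring
  -- diagonal entries in the first k rows
  have hdiagE : ∀ q : Fin N, (q:ℕ) < k → E q q = -2 * lam ((q:ℕ)+1) - 1 := by
    intro q hq
    have hqi : q ≠ i := by intro e; rw [e] at hq; omega
    have hqN' : (q:ℕ)+1 ≠ N := by omega
    rw [hEmid q hqi hqN' q, hM_diag q, div_self (pow_ne_zero _ (ne_of_gt (hrpos q)))]
  have hEi' : ∀ (b : ℕ) (hb : b < N), E i ⟨b, hb⟩ = r (b+1) ^ (2*n) :=
    fun b hb => hEi ⟨b, hb⟩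
  have hElast' : ∀ (a b : ℕ) (ha : a < N) (hb : b < N), a + 1 = N → (⟨a, ha⟩ : Fin N) ≠ i →
      E ⟨a, ha⟩ ⟨b, hb⟩ = M ⟨a, ha⟩ ⟨b, hb⟩ :=
    fun a b ha hb h1 h2 => hElast ⟨a, ha⟩ h1 h2 ⟨b, hb⟩
  have hEmid' : ∀ (a b : ℕ) (ha : a < N) (hb : b < N), (⟨a, ha⟩ : Fin N) ≠ i → a + 1 ≠ N →
      E ⟨a, ha⟩ ⟨b, hb⟩ = M ⟨a, ha⟩ ⟨b, hb⟩ - r (b+1) ^ (2*n) / r (a+1) ^ (2*n) :=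
    fun a b ha hb h1 h2 => hEmid ⟨a, ha⟩ h1 h2 ⟨b, hb⟩
  have hM_diag' : ∀ (a : ℕ) (ha : a < N), M ⟨a, ha⟩ ⟨a, ha⟩ = -2 * lam (a+1) :=
    fun a ha => hM_diag ⟨a, ha⟩
  have hM_lt' : ∀ (a b : ℕ) (ha : a < N) (hb : b < N), a < b →
      M ⟨a, ha⟩ ⟨b, hb⟩ = r (b+1) ^ (2*n) / r (a+1) ^ (2*n) :=
    fun a b ha hb h => hM_lt ⟨a, ha⟩ ⟨b, hb⟩ h
  have hM_gt' : ∀ (a b : ℕ) (ha : a < N) (hb : b < N), b < a → M ⟨a, ha⟩ ⟨b, hb⟩ = -1 :=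
    fun a b ha hb h => hM_gt ⟨a, ha⟩ ⟨b, hb⟩ h
  rw [stepA, ← hdet]
  rw [det_lower_block k (n := N) (j := N - k) (by omega) E hzero]
  -- the scalar product
  have hprod : (∏ q : Fin k, E ⟨q, by omega⟩ ⟨q, by omega⟩)
      = ∏ j ∈ Finset.Icc 1 k, (-2 * lam j - 1) := by
    have h1 : (∏ q : Fin k, E ⟨q, by omega⟩ ⟨q, by omega⟩)
        = ∏ q : Fin k, (-2 * lam ((q:ℕ)+1) - 1) :=
      Finset.prod_congr rfl fun q _ => hdiagE ⟨(q:ℕ), by omega⟩ q.2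
    rw [h1, Fin.prod_univ_eq_prod_range (fun q => -2 * lam (q+1) - 1) k]
    rw [← Finset.Ico_add_one_right_eq_Icc, Finset.prod_Ico_eq_prod_range]
    apply Finset.prod_congr
    · congr 1
    · intro q _; rw [Nat.add_comm 1 q]
  rw [hprod]
  congr 1
  -- the block determinant
  by_cases hlast : k + 1 = N
  · rw [Ldet, if_neg (by omega)]
    haveI : Subsingleton (Fin (N - k)) := ⟨fun a b => by ext; omega⟩
    rw [det_eq_elem_of_subsingleton _ (⟨0, by omega⟩ : Fin (N - k))]
    simp only [submatrix_apply]
    have hgi : (⟨k + ((⟨0, by omega⟩ : Fin (N - k)) : ℕ), by omega⟩ : Fin N) = i := by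
      ext; simp [hk]
    rw [hgi, hEi']
  · have hk2 : k + 2 ≤ N := by omega
    rw [Ldet, if_pos (by omega)]
    have hsz : N - (k + 2) + 2 = N - k := by omega
    rw [← det_submatrix_equiv_self (finCongr hsz.symm) (Lmat N lam r n (k+1) (k+2))]
    congr 1
    ext p cc
    simp only [submatrix_apply, finCongr_apply]
    have hpN : (p:ℕ) < N - k := p.2
    have hcN : (cc:ℕ) < N - k := cc.2
    by_cases hp0 : (p:ℕ) = 0
    · have hgi : (⟨k + (p:ℕ), by omega⟩ : Fin N) = i := by ext; simp [hk, hp0]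
      rw [hgi, hEi']
      simp only [Lmat, Matrix.of_apply, Fin.coe_cast, hp0, eq_self_iff_true, if_true]
      by_cases hc0 : (cc:ℕ) = 0
      · rw [if_pos hc0]
        have e1 : k + (cc:ℕ) + 1 = k + 1 := by omega
        rw [e1]
      · rw [if_neg hc0]
        have e1 : k + 2 + (cc:ℕ) - 1 = k + (cc:ℕ) + 1 := by omega
        rw [e1]
    · have hqi : (⟨k + (p:ℕ), by omega⟩ : Fin N) ≠ i := by
        intro e
        have := congrArg Fin.val e
        simp only [← hk] at this
        omega
      by_cases hpl : (p:ℕ) = N - (k + 2) + 1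
      · rw [hElast' (k + (p:ℕ)) (k + (cc:ℕ)) (by omega) (by omega) (by omega) hqi]
        simp only [Lmat, Matrix.of_apply, Fin.coe_cast]
        rw [if_neg hp0, if_pos hpl]
        by_cases hcl : (cc:ℕ) = N - (k + 2) + 1
        · rw [if_pos hcl]
          have hcol : (⟨k + (cc:ℕ), by omega⟩ : Fin N) = (⟨k + (p:ℕ), by omega⟩ : Fin N) := by
            ext; show k + (cc:ℕ) = k + (p:ℕ); omega
          rw [hcol, hM_diag']
          have e2 : k + (p:ℕ) + 1 = N := by omega
          rw [e2]
        · rw [if_neg hcl, hM_gt' _ _ _ _ (by omega)]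
      · have hqN : k + (p:ℕ) + 1 ≠ N := by omega
        rw [hEmid' (k + (p:ℕ)) (k + (cc:ℕ)) (by omega) (by omega) hqi hqN]
        simp only [Lmat, Matrix.of_apply, Fin.coe_cast, tpow]
        simp only [if_neg hp0, if_neg hpl]
        by_cases hc0 : (cc:ℕ) = 0
        · simp only [if_pos hc0]
          rw [hM_gt' _ _ _ _ (by omega), div_pow]
          have e1 : k + 2 + (p:ℕ) - 1 = k + (p:ℕ) + 1 := by omega
          have e2 : k + (cc:ℕ) + 1 = k + 1 := by omega
          rw [e1, e2]
        · simp only [if_neg hc0]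
          rcases lt_trichotomy (cc:ℕ) (p:ℕ) with hlt | heq | hgt
          · simp only [if_pos (show k + 2 + (cc:ℕ) - 1 < k + 2 + (p:ℕ) - 1 by omega)]
            rw [hM_gt' _ _ _ _ (by omega), div_pow]
            have e1 : k + 2 + (p:ℕ) - 1 = k + (p:ℕ) + 1 := by omega
            have e2 : k + 2 + (cc:ℕ) - 1 = k + (cc:ℕ) + 1 := by omega
            rw [e1, e2]
          · simp only [if_neg (show ¬ (k + 2 + (cc:ℕ) - 1 < k + 2 + (p:ℕ) - 1) by omega),
              if_pos (show k + 2 + (cc:ℕ) - 1 = k + 2 + (p:ℕ) - 1 by omega)]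
            have hcol : (⟨k + (cc:ℕ), by omega⟩ : Fin N) = (⟨k + (p:ℕ), by omega⟩ : Fin N) := by
              ext; show k + (cc:ℕ) = k + (p:ℕ); omega
            rw [hcol, hM_diag']
            have e2 : k + (cc:ℕ) + 1 = k + (p:ℕ) + 1 := by omega
            rw [e2]
            rw [div_self (pow_ne_zero _ (ne_of_gt (hpos (k + (p:ℕ) + 1) (by omega) (by omega))))]
            have e1 : k + 2 + (p:ℕ) - 1 = k + (p:ℕ) + 1 := by omega
            rw [e1]
          · simp only [if_neg (show ¬ (k + 2 + (cc:ℕ) - 1 < k + 2 + (p:ℕ) - 1) by omega),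
              if_neg (show ¬ (k + 2 + (cc:ℕ) - 1 = k + 2 + (p:ℕ) - 1) by omega)]
            rw [hM_lt' _ _ _ _ (by omega)]
            ring
end
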